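/- (Example 1, m = 2) Let n be a positive integer, let A be an invertible n×n real matrix, let D be an n×n real matrix, and let b ∈ ℝⁿ with ‖b‖ = 1. For real ε and α ∈ {1, 2} define x̂_α(ε) := (1/2)((A + (α·ε) • D)⁻¹ b + (A − (α·ε) • D)⁻¹ b). Then there exist constants C > 0 and ε₀ > 0 such that for every real ε with 0 < |ε| < ε₀, the matrices A ± ε • D and A ± (2ε) • D are invertible and the combination x̂* := (x̂₂(ε) − 4 x̂₁(ε))/(−3) satisfies ‖A⁻¹ b − x̂*‖ ≤ C · ε⁴. -/

import Mathlib

open scoped Matrix.Norms.L2Operator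

/-- Matrix-vector product, with the vector living in Euclidean space (so that vector
norms are the Euclidean ones). -/
noncomputable def mulVecE {n : ℕ} (M : Matrix (Fin n) (Fin n) ℝ)
    (v : EuclideanSpace ℝ (Fin n)) : EuclideanSpace ℝ (Fin n) :=
  (WithLp.equiv 2 (Fin n → ℝ)).symm (M.mulVec ((WithLp.equiv 2 (Fin n → ℝ)) v))

/-- The averaged perturbation solution
`x̂_α(ε) = (1/2)((A + (α ε) • D)⁻¹ b + (A - (α ε) • D)⁻¹ b)`. -/
noncomputable def xhat {n : ℕ} (A D : Matrix (Fin n) (Fin n) ℝ)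
    (b : EuclideanSpace ℝ (Fin n)) (ε α : ℝ) : EuclideanSpace ℝ (Fin n) :=
  (1 / 2 : ℝ) • (mulVecE (A + (α * ε) • D)⁻¹ b + mulVecE (A - (α * ε) • D)⁻¹ b)

section myAux

variable {n : ℕ} (A D : Matrix (Fin n) (Fin n) ℝ)

/-- First-order resolvent identity. -/
lemma my_step (hA : IsUnit A) (t : ℝ) (hu : IsUnit (A + t • D)) :
    (A + t • D)⁻¹ = A⁻¹ - t • (A⁻¹ * D * (A + t • D)⁻¹) := by
  set M := A + t • D with hM
  have hdet : IsUnit M.det := (Matrix.isUnit_iff_isUnit_det M).mp hu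
  have hAdet : IsUnit A.det := (Matrix.isUnit_iff_isUnit_det A).mp hA
  have h1 : M * M⁻¹ = 1 := Matrix.mul_nonsing_inv M hdet
  have h2 : A⁻¹ * A = 1 := Matrix.nonsing_inv_mul A hAdet
  have key : A * M⁻¹ = 1 - t • (D * M⁻¹) := by
    have : (M - t • D) * M⁻¹ = M * M⁻¹ - t • (D * M⁻¹) := by
      rw [Matrix.sub_mul, Matrix.smul_mul]
    rw [h1] at this; simpa [hM] using this
  calc M⁻¹ = (A⁻¹ * A) * M⁻¹ := by rw [h2, Matrix.one_mul]
    _ = A⁻¹ * (A * M⁻¹) := by rw [Matrix.mul_assoc]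
    _ = A⁻¹ * (1 - t • (D * M⁻¹)) := by rw [key]
    _ = A⁻¹ - t • (A⁻¹ * D * M⁻¹) := by
        rw [Matrix.mul_sub, Matrix.mul_one, Matrix.mul_smul, Matrix.mul_assoc]

/-- Fourth-order expansion of the perturbed inverse. -/
lemma my_expand4 (hA : IsUnit A) (t : ℝ) (hu : IsUnit (A + t • D)) :
    (A + t • D)⁻¹ = A⁻¹ - t • ((A⁻¹ * D) * A⁻¹)
      + t ^ 2 • ((A⁻¹ * D) * ((A⁻¹ * D) * A⁻¹))
      - t ^ 3 • ((A⁻¹ * D) * ((A⁻¹ * D) * ((A⁻¹ * D) * A⁻¹)))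
      + t ^ 4 • ((A⁻¹ * D) * ((A⁻¹ * D) * ((A⁻¹ * D) * ((A⁻¹ * D) * (A + t • D)⁻¹)))) := by
  set B := A⁻¹ * D with hB
  have h : (A + t • D)⁻¹ = A⁻¹ - t • (B * (A + t • D)⁻¹) := by
    simpa [hB, Matrix.mul_assoc] using my_step A D hA t hu
  conv_lhs => rw [h, h, h, h]
  simp only [Matrix.mul_sub, Matrix.mul_smul, smul_sub, smul_add, smul_smul]
  module

lemma my_isUnit (hA : IsUnit A) (t : ℝ) (h : |t| * ‖A⁻¹ * D‖ < 1) :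
    IsUnit (A + t • D) := by
  have hAdet : IsUnit A.det := (Matrix.isUnit_iff_isUnit_det A).mp hA
  have hfac : A + t • D = A * (1 - (-(t • (A⁻¹ * D)))) := by
    rw [sub_neg_eq_add, Matrix.mul_add, Matrix.mul_one, Matrix.mul_smul,
      ← Matrix.mul_assoc, Matrix.mul_nonsing_inv A hAdet, Matrix.one_mul]
  have hnorm : ‖-(t • (A⁻¹ * D))‖ < 1 := by
    rwa [norm_neg, norm_smul, Real.norm_eq_abs]
  rw [hfac]
  exact hA.mul (Units.oneSub _ hnorm).isUnit

lemma my_inv_bound (hA : IsUnit A) (t : ℝ) (hu : IsUnit (A + t • D))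
    (h : |t| * ‖A⁻¹ * D‖ ≤ 1 / 2) :
    ‖(A + t • D)⁻¹‖ ≤ 2 * ‖A⁻¹‖ := by
  have h1 := my_step A D hA t hu
  have h2 : ‖(A + t • D)⁻¹‖ ≤ ‖A⁻¹‖ + |t| * ‖A⁻¹ * D‖ * ‖(A + t • D)⁻¹‖ := by
    calc ‖(A + t • D)⁻¹‖ = ‖A⁻¹ - t • (A⁻¹ * D * (A + t • D)⁻¹)‖ := by rw [← h1]
      _ ≤ ‖A⁻¹‖ + ‖t • (A⁻¹ * D * (A + t • D)⁻¹)‖ := norm_sub_le _ _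
      _ ≤ ‖A⁻¹‖ + |t| * (‖A⁻¹ * D‖ * ‖(A + t • D)⁻¹‖) := by
          rw [norm_smul, Real.norm_eq_abs]
          gcongr
          exact norm_mul_le _ _
      _ = ‖A⁻¹‖ + |t| * ‖A⁻¹ * D‖ * ‖(A + t • D)⁻¹‖ := by ring
  nlinarith [norm_nonneg (A + t • D)⁻¹, mul_le_mul_of_nonneg_right h (norm_nonneg (A + t • D)⁻¹)]

end myAux

lemma my_combo {V : Type*} [AddCommGroup V] [Module ℝ V] (ε : ℝ)
    (a g1 g2 g3 f1 f2 f3 f4 r1 r2 r3 r4 : V)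
    (e1 : r1 = a - ε • g1 + ε ^ 2 • g2 - ε ^ 3 • g3 + ε ^ 4 • f1)
    (e2 : r2 = a - (-ε) • g1 + (-ε) ^ 2 • g2 - (-ε) ^ 3 • g3 + (-ε) ^ 4 • f2)
    (e3 : r3 = a - (2*ε) • g1 + (2*ε) ^ 2 • g2 - (2*ε) ^ 3 • g3 + (2*ε) ^ 4 • f3)
    (e4 : r4 = a - (-(2*ε)) • g1 + (-(2*ε)) ^ 2 • g2 - (-(2*ε)) ^ 3 • g3 + (-(2*ε)) ^ 4 • f4) :
    a - (-3 : ℝ)⁻¹ • ((1/2 : ℝ) • (r3 + r4) - (4 : ℝ) • ((1/2 : ℝ) • (r1 + r2)))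
      = ε ^ 4 • ((8/3 : ℝ) • (f3 + f4) - (2/3 : ℝ) • (f1 + f2)) := by
  subst e1 e2 e3 e4
  module

lemma mulVecE_add {n : ℕ} (M N : Matrix (Fin n) (Fin n) ℝ) (v : EuclideanSpace ℝ (Fin n)) :
    mulVecE (M + N) v = mulVecE M v + mulVecE N v := by
  simp [mulVecE, Matrix.add_mulVec]

lemma mulVecE_smul {n : ℕ} (c : ℝ) (M : Matrix (Fin n) (Fin n) ℝ) (v : EuclideanSpace ℝ (Fin n)) :
    mulVecE (c • M) v = c • mulVecE M v := by
  simp [mulVecE, Matrix.smul_mulVec]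

lemma mulVecE_sub {n : ℕ} (M N : Matrix (Fin n) (Fin n) ℝ) (v : EuclideanSpace ℝ (Fin n)) :
    mulVecE (M - N) v = mulVecE M v - mulVecE N v := by
  simp [mulVecE, Matrix.sub_mulVec]

lemma mulVecE_norm_le {n : ℕ} (M : Matrix (Fin n) (Fin n) ℝ) (v : EuclideanSpace ℝ (Fin n)) :
    ‖mulVecE M v‖ ≤ ‖M‖ * ‖v‖ :=
  M.l2_opNorm_mulVec v

set_option maxHeartbeats 1600000 in
/-- Example 1 (`m = 2`): there exist `C > 0` and `ε₀ > 0` such that for all `ε` with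
`0 < |ε| < ε₀`, the matrices `A ± ε • D` and `A ± (2ε) • D` are invertible and
`x̂* = (x̂₂(ε) - 4 x̂₁(ε))/(-3)` satisfies `‖A⁻¹ b - x̂*‖ ≤ C ε⁴`. -/
theorem m_two_combination_error (n : ℕ) (hn : 0 < n)
    (A D : Matrix (Fin n) (Fin n) ℝ) (hA : IsUnit A)
    (b : EuclideanSpace ℝ (Fin n)) (hb : ‖b‖ = 1) :
    ∃ C > (0 : ℝ), ∃ ε₀ > (0 : ℝ), ∀ ε : ℝ, 0 < |ε| → |ε| < ε₀ →
      IsUnit (A + ε • D) ∧ IsUnit (A - ε • D)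
        ∧ IsUnit (A + (2 * ε) • D) ∧ IsUnit (A - (2 * ε) • D)
        ∧ ‖mulVecE A⁻¹ b
              - ((-3 : ℝ)⁻¹) • (xhat A D b ε 2 - (4 : ℝ) • xhat A D b ε 1)‖
            ≤ C * ε ^ 4 := by
  set B : Matrix (Fin n) (Fin n) ℝ := A⁻¹ * D with hBdef
  set β : ℝ := ‖B‖ with hβ
  set c : ℝ := ‖A⁻¹‖ with hc
  have hβ0 : 0 ≤ β := norm_nonneg _
  have hc0 : 0 ≤ c := norm_nonneg _
  refine ⟨14 * β ^ 4 * c + 1, by positivity, (4 * (β + 1))⁻¹, by positivity, ?_⟩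
  intro ε hε hεsmall
  -- smallness of all four parameters
  have hsub : ∀ t : ℝ, A - t • D = A + (-t) • D := by
    intro t; rw [neg_smul, sub_eq_add_neg]
  have hkey : ∀ t : ℝ, |t| ≤ 2 * |ε| → |t| * β ≤ 1 / 2 := by
    intro t ht
    have h1 : |t| < 2 * (4 * (β + 1))⁻¹ := lt_of_le_of_lt ht (by linarith)
    have h2 : (0:ℝ) < β + 1 := by linarith
    calc |t| * β ≤ 2 * (4 * (β + 1))⁻¹ * β := by
          apply mul_le_mul_of_nonneg_right (le_of_lt h1) hβ0
      _ = β / (2 * (β + 1)) := by field_simp; ring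
      _ ≤ 1 / 2 := by rw [div_le_div_iff₀ (by linarith) (by norm_num)]; linarith
  have habs : ∀ t : ℝ, |t| ≤ 2 * |ε| → IsUnit (A + t • D) ∧ ‖(A + t • D)⁻¹‖ ≤ 2 * c := by
    intro t ht
    have h12 := hkey t ht
    have hu : IsUnit (A + t • D) := my_isUnit A D hA t (by rw [← hBdef]; linarith)
    exact ⟨hu, my_inv_bound A D hA t hu (by rw [← hBdef]; exact h12)⟩
  have he1 : |ε| ≤ 2 * |ε| := by linarith
  have he2 : |(-ε)| ≤ 2 * |ε| := by rw [abs_neg]; linarith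
  have he3 : |(2*ε)| ≤ 2 * |ε| := by rw [abs_mul]; simp [abs_of_nonneg]
  have he4 : |(-(2*ε))| ≤ 2 * |ε| := by rw [abs_neg, abs_mul]; simp [abs_of_nonneg]
  obtain ⟨u1, n1⟩ := habs ε he1
  obtain ⟨u2, n2⟩ := habs (-ε) he2
  obtain ⟨u3, n3⟩ := habs (2*ε) he3
  obtain ⟨u4, n4⟩ := habs (-(2*ε)) he4
  have u2' : IsUnit (A - ε • D) := by rw [hsub]; exact u2
  have u4' : IsUnit (A - (2*ε) • D) := by rw [hsub]; exact u4
  refine ⟨u1, u2', u3, u4', ?_⟩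
  -- the four expansions
  have e1 := my_expand4 A D hA ε u1
  have e3 := my_expand4 A D hA (2*ε) u3
  have e2 : (A - ε • D)⁻¹ = A⁻¹ - (-ε) • ((A⁻¹ * D) * A⁻¹)
      + (-ε) ^ 2 • ((A⁻¹ * D) * ((A⁻¹ * D) * A⁻¹))
      - (-ε) ^ 3 • ((A⁻¹ * D) * ((A⁻¹ * D) * ((A⁻¹ * D) * A⁻¹)))
      + (-ε) ^ 4 • ((A⁻¹ * D) * ((A⁻¹ * D) * ((A⁻¹ * D) * ((A⁻¹ * D) * (A - ε • D)⁻¹)))) := by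
    rw [hsub]; exact my_expand4 A D hA (-ε) u2
  have e4 : (A - (2*ε) • D)⁻¹ = A⁻¹ - (-(2*ε)) • ((A⁻¹ * D) * A⁻¹)
      + (-(2*ε)) ^ 2 • ((A⁻¹ * D) * ((A⁻¹ * D) * A⁻¹))
      - (-(2*ε)) ^ 3 • ((A⁻¹ * D) * ((A⁻¹ * D) * ((A⁻¹ * D) * A⁻¹)))
      + (-(2*ε)) ^ 4 • ((A⁻¹ * D) * ((A⁻¹ * D) * ((A⁻¹ * D) * ((A⁻¹ * D) * (A - (2*ε) • D)⁻¹)))) := by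
    rw [hsub]; exact my_expand4 A D hA (-(2*ε)) u4
  set f1 := (A⁻¹ * D) * ((A⁻¹ * D) * ((A⁻¹ * D) * ((A⁻¹ * D) * (A + ε • D)⁻¹))) with hf1
  set f2 := (A⁻¹ * D) * ((A⁻¹ * D) * ((A⁻¹ * D) * ((A⁻¹ * D) * (A - ε • D)⁻¹))) with hf2
  set f3 := (A⁻¹ * D) * ((A⁻¹ * D) * ((A⁻¹ * D) * ((A⁻¹ * D) * (A + (2*ε) • D)⁻¹))) with hf3
  set f4 := (A⁻¹ * D) * ((A⁻¹ * D) * ((A⁻¹ * D) * ((A⁻¹ * D) * (A - (2*ε) • D)⁻¹))) with hf4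
  have hmat := my_combo ε A⁻¹ ((A⁻¹ * D) * A⁻¹) ((A⁻¹ * D) * ((A⁻¹ * D) * A⁻¹))
    ((A⁻¹ * D) * ((A⁻¹ * D) * ((A⁻¹ * D) * A⁻¹))) f1 f2 f3 f4
    (A + ε • D)⁻¹ (A - ε • D)⁻¹ (A + (2*ε) • D)⁻¹ (A - (2*ε) • D)⁻¹ e1 e2 e3 e4
  -- rewrite goal as mulVecE of a single matrix
  have hv : mulVecE A⁻¹ b - ((-3 : ℝ)⁻¹) • (xhat A D b ε 2 - (4 : ℝ) • xhat A D b ε 1)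
      = mulVecE (A⁻¹ - (-3 : ℝ)⁻¹ • ((1/2 : ℝ) • ((A + (2*ε) • D)⁻¹ + (A - (2*ε) • D)⁻¹)
          - (4 : ℝ) • ((1/2 : ℝ) • ((A + ε • D)⁻¹ + (A - ε • D)⁻¹)))) b := by
    simp [xhat, mulVecE_sub, mulVecE_smul, mulVecE_add, one_mul]
  rw [hv, hmat]
  -- norm bounds
  have hβf : ∀ (R : Matrix (Fin n) (Fin n) ℝ), ‖R‖ ≤ 2 * c →
      ‖(A⁻¹ * D) * ((A⁻¹ * D) * ((A⁻¹ * D) * ((A⁻¹ * D) * R)))‖ ≤ β ^ 4 * (2 * c) := by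
    intro R hR
    have h0 : ‖(A⁻¹ * D) * R‖ ≤ β * ‖R‖ := norm_mul_le _ _
    have h1 : ‖(A⁻¹ * D) * ((A⁻¹ * D) * R)‖ ≤ β * (β * ‖R‖) := by
      calc ‖(A⁻¹ * D) * ((A⁻¹ * D) * R)‖ ≤ β * ‖(A⁻¹ * D) * R‖ := norm_mul_le _ _
        _ ≤ β * (β * ‖R‖) := by apply mul_le_mul_of_nonneg_left h0 hβ0
    have h2 : ‖(A⁻¹ * D) * ((A⁻¹ * D) * ((A⁻¹ * D) * R))‖ ≤ β * (β * (β * ‖R‖)) := by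
      calc ‖(A⁻¹ * D) * ((A⁻¹ * D) * ((A⁻¹ * D) * R))‖
          ≤ β * ‖(A⁻¹ * D) * ((A⁻¹ * D) * R)‖ := norm_mul_le _ _
        _ ≤ β * (β * (β * ‖R‖)) := by apply mul_le_mul_of_nonneg_left h1 hβ0
    calc ‖(A⁻¹ * D) * ((A⁻¹ * D) * ((A⁻¹ * D) * ((A⁻¹ * D) * R)))‖
        ≤ β * ‖(A⁻¹ * D) * ((A⁻¹ * D) * ((A⁻¹ * D) * R))‖ := norm_mul_le _ _
      _ ≤ β * (β * (β * (β * ‖R‖))) := by apply mul_le_mul_of_nonneg_left h2 hβ0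
      _ = β ^ 4 * ‖R‖ := by ring
      _ ≤ β ^ 4 * (2 * c) := by apply mul_le_mul_of_nonneg_left hR (by positivity)
  have hn2 : ‖(A - ε • D)⁻¹‖ ≤ 2 * c := by rw [hsub]; exact n2
  have hn4 : ‖(A - (2*ε) • D)⁻¹‖ ≤ 2 * c := by rw [hsub]; exact n4
  have hF1 : ‖f1‖ ≤ β ^ 4 * (2 * c) := hβf _ n1
  have hF2 : ‖f2‖ ≤ β ^ 4 * (2 * c) := hβf _ hn2
  have hF3 : ‖f3‖ ≤ β ^ 4 * (2 * c) := hβf _ n3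
  have hF4 : ‖f4‖ ≤ β ^ 4 * (2 * c) := hβf _ hn4
  have hW : ‖(8/3 : ℝ) • (f3 + f4) - (2/3 : ℝ) • (f1 + f2)‖ ≤ 14 * β ^ 4 * c := by
    calc ‖(8/3 : ℝ) • (f3 + f4) - (2/3 : ℝ) • (f1 + f2)‖
        ≤ ‖(8/3 : ℝ) • (f3 + f4)‖ + ‖(2/3 : ℝ) • (f1 + f2)‖ := norm_sub_le _ _
      _ = (8/3) * ‖f3 + f4‖ + (2/3) * ‖f1 + f2‖ := by
          rw [norm_smul, norm_smul, Real.norm_eq_abs, Real.norm_eq_abs,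
            abs_of_pos (by norm_num : (0:ℝ) < 8/3), abs_of_pos (by norm_num : (0:ℝ) < 2/3)]
      _ ≤ (8/3) * (‖f3‖ + ‖f4‖) + (2/3) * (‖f1‖ + ‖f2‖) := by
          gcongr <;> exact norm_add_le _ _
      _ ≤ (8/3) * (β ^ 4 * (2*c) + β ^ 4 * (2*c)) + (2/3) * (β ^ 4 * (2*c) + β ^ 4 * (2*c)) := by
          gcongr
      _ = (40/3) * β ^ 4 * c := by ring
      _ ≤ 14 * β ^ 4 * c := by nlinarith [mul_nonneg (pow_nonneg hβ0 4) hc0]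
  calc ‖mulVecE (ε ^ 4 • ((8/3 : ℝ) • (f3 + f4) - (2/3 : ℝ) • (f1 + f2))) b‖
      ≤ ‖ε ^ 4 • ((8/3 : ℝ) • (f3 + f4) - (2/3 : ℝ) • (f1 + f2))‖ * ‖b‖ :=
        mulVecE_norm_le _ _
    _ = ε ^ 4 * ‖(8/3 : ℝ) • (f3 + f4) - (2/3 : ℝ) • (f1 + f2)‖ := by
        rw [hb, mul_one, norm_smul, Real.norm_eq_abs, abs_of_nonneg (by positivity)]
    _ ≤ ε ^ 4 * (14 * β ^ 4 * c) := by
        apply mul_le_mul_of_nonneg_left hW (by positivity)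
    _ ≤ (14 * β ^ 4 * c + 1) * ε ^ 4 := by nlinarith [sq_nonneg (ε^2)]
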